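/- Define the Hamiltonian H: ℝ⁶ → ℝ by H(a, b, x, p_a, p_b, p_x) = −x·p_x·(1 + (a² + b²)·p_x − x·p_x − a·p_a − b·p_b). Suppose (a(t), b(t), x(t), p_a(t), p_b(t), p_x(t)) is a differentiable curve on an interval I ⊆ ℝ satisfying Hamilton's equations: da/dt = ∂H/∂p_a, db/dt = ∂H/∂p_b, dx/dt = ∂H/∂p_x, dp_a/dt = −∂H/∂a, dp_b/dt = −∂H/∂b, dp_x/dt = −∂H/∂x. Then the quantity Ψ(t) = x(t)·p_x(t) + (1/2)·(a(t)·p_a(t) + b(t)·p_b(t)) is constant along the solution, i.e., dΨ/dt = 0 on I. -/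

import Mathlib

/-- Derivative of a quadratic polynomial. -/
lemma quad_deriv (α β γ q : ℝ) :
    deriv (fun s : ℝ => α + β * s + γ * s ^ 2) q = β + 2 * γ * q := by
  have h : HasDerivAt (fun s : ℝ => α + β * s + γ * s ^ 2)
      (β + 2 * γ * q) q := by
    have h1 : HasDerivAt (fun s : ℝ => α + β * s) (β) q := by
      simpa using ((hasDerivAt_id q).const_mul β).const_add α
    have h2 : HasDerivAt (fun s : ℝ => γ * s ^ 2) (γ * (2 * q)) q := by
      simpa using (hasDerivAt_pow 2 q).const_mul γ
    exact (h1.add h2).congr_deriv (by ring)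
  exact h.deriv

/-- For the Hamiltonian `H(a,b,x,p_a,p_b,p_x) = −x·p_x·(1 + (a²+b²)p_x − x·p_x − a·p_a − b·p_b)`
of the free multiplicative Brownian motion, the quantity
`Ψ = x·p_x + (1/2)(a·p_a + b·p_b)` is a constant of motion along any solution of
Hamilton's equations. -/
theorem constant_of_motion
    (H : ℝ → ℝ → ℝ → ℝ → ℝ → ℝ → ℝ)
    (hH : ∀ a b x pa pb px : ℝ,
      H a b x pa pb px = -x * px * (1 + (a ^ 2 + b ^ 2) * px - x * px - a * pa - b * pb))
    (I : Set ℝ) (a b x pa pb px : ℝ → ℝ)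
    (ha : ∀ t ∈ I, HasDerivAt a
      (deriv (fun q => H (a t) (b t) (x t) q (pb t) (px t)) (pa t)) t)
    (hb : ∀ t ∈ I, HasDerivAt b
      (deriv (fun q => H (a t) (b t) (x t) (pa t) q (px t)) (pb t)) t)
    (hx : ∀ t ∈ I, HasDerivAt x
      (deriv (fun q => H (a t) (b t) (x t) (pa t) (pb t) q) (px t)) t)
    (hpa : ∀ t ∈ I, HasDerivAt pa
      (-(deriv (fun q => H q (b t) (x t) (pa t) (pb t) (px t)) (a t))) t)
    (hpb : ∀ t ∈ I, HasDerivAt pb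
      (-(deriv (fun q => H (a t) q (x t) (pa t) (pb t) (px t)) (b t))) t)
    (hpx : ∀ t ∈ I, HasDerivAt px
      (-(deriv (fun q => H (a t) (b t) q (pa t) (pb t) (px t)) (x t))) t) :
    ∀ t ∈ I, HasDerivAt
      (fun u : ℝ => x u * px u + (1 / 2) * (a u * pa u + b u * pb u)) 0 t := by
  intro t ht
  set A := a t; set B := b t; set X := x t
  set PA := pa t; set PB := pb t; set PX := px t
  -- compute each partial derivative
  have ea : deriv (fun q => H A B X q PB PX) PA = A * X * PX := by
    have hfun : (fun q => H A B X q PB PX)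
        = fun q => (-X * PX * (1 + (A ^ 2 + B ^ 2) * PX - X * PX - B * PB))
          + (X * PX * A) * q + 0 * q ^ 2 := by
      funext q; rw [hH]; ring
    rw [hfun, quad_deriv]; ring
  have eb : deriv (fun q => H A B X PA q PX) PB = B * X * PX := by
    have hfun : (fun q => H A B X PA q PX)
        = fun q => (-X * PX * (1 + (A ^ 2 + B ^ 2) * PX - X * PX - A * PA))
          + (X * PX * B) * q + 0 * q ^ 2 := by
      funext q; rw [hH]; ring
    rw [hfun, quad_deriv]; ring
  have ex : deriv (fun q => H A B X PA PB q) PX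
      = -X * (1 + 2 * (A ^ 2 + B ^ 2) * PX - 2 * X * PX - A * PA - B * PB) := by
    have hfun : (fun q => H A B X PA PB q)
        = fun q => 0 + (-X * (1 - A * PA - B * PB)) * q
          + (-X * ((A ^ 2 + B ^ 2) - X)) * q ^ 2 := by
      funext q; rw [hH]; ring
    rw [hfun, quad_deriv]; ring
  have epa : deriv (fun q => H q B X PA PB PX) A = -X * PX * (2 * A * PX - PA) := by
    have hfun : (fun q => H q B X PA PB PX)
        = fun q => (-X * PX * (1 + B ^ 2 * PX - X * PX - B * PB))
          + (X * PX * PA) * q + (-X * PX * PX) * q ^ 2 := by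
      funext q; rw [hH]; ring
    rw [hfun, quad_deriv]; ring
  have epb : deriv (fun q => H A q X PA PB PX) B = -X * PX * (2 * B * PX - PB) := by
    have hfun : (fun q => H A q X PA PB PX)
        = fun q => (-X * PX * (1 + A ^ 2 * PX - X * PX - A * PA))
          + (X * PX * PB) * q + (-X * PX * PX) * q ^ 2 := by
      funext q; rw [hH]; ring
    rw [hfun, quad_deriv]; ring
  have epx : deriv (fun q => H A B q PA PB PX) X
      = -PX * (1 + (A ^ 2 + B ^ 2) * PX - 2 * X * PX - A * PA - B * PB) := by
    have hfun : (fun q => H A B q PA PB PX)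
        = fun q => 0 + (-PX * (1 + (A ^ 2 + B ^ 2) * PX - A * PA - B * PB)) * q
          + (PX * PX) * q ^ 2 := by
      funext q; rw [hH]; ring
    rw [hfun, quad_deriv]; ring
  have Ha := ha t ht; have Hb := hb t ht; have Hx := hx t ht
  have Hpa := hpa t ht; have Hpb := hpb t ht; have Hpx := hpx t ht
  rw [ea] at Ha; rw [eb] at Hb; rw [ex] at Hx
  rw [epa] at Hpa; rw [epb] at Hpb; rw [epx] at Hpx
  have := (Hx.mul Hpx).add (((Ha.mul Hpa).add (Hb.mul Hpb)).const_mul (1 / 2))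
  exact this.congr_deriv (by ring)
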